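/- The element γ = i is not a norm in the extension ℚ(i,θ)/ℚ(i), where θ = (1+√5)/2; consequently the cyclic algebra (ℚ(i,θ)/ℚ(i), σ, i) is a division algebra. -/
import Mathlib
set_option maxHeartbeats 1600000


open Matrix

/-- The golden number θ = (1+√5)/2, as a complex number. -/
noncomputable def gold : ℂ := (1 + Real.sqrt 5) / 2

/-- The element `a + bθ + i(c + dθ)` of `ℚ(i,θ)` (with rational `a,b,c,d`). -/
noncomputable def qelt (a b c d : ℚ) : ℂ :=
  (a : ℂ) + b * gold + Complex.I * ((c : ℂ) + d * gold)

/-- Its conjugate under `σ : θ ↦ 1 − θ`. -/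
noncomputable def qeltBar (a b c d : ℚ) : ℂ :=
  (a : ℂ) + b * (1 - gold) + Complex.I * ((c : ℂ) + d * (1 - gold))

/-- The matrix `[[x₁, x₂], [i·σ(x₂), σ(x₁)]]` of the quaternion algebra
`𝒜 = (ℚ(i,θ)/ℚ(i), σ, i)`, with `x₁ = a + bθ + i(c+dθ)`, `x₂ = e + fθ + i(g+hθ)`. -/
noncomputable def qmatA (a b c d e f g h : ℚ) : Matrix (Fin 2) (Fin 2) ℂ :=
  !![qelt a b c d, qelt e f g h;
     Complex.I * qeltBar e f g h, qeltBar a b c d]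

lemma d1 : ∀ a b c d : ZMod 5, a^2 - b^2 = -(2*(c*d)) → 2*(a*b) = c^2 - d^2 →
    a = 0 ∧ b = 0 ∧ c = 0 ∧ d = 0 := by decide

lemma descent : ∀ n : ℕ, ∀ u1 u2 v1 v2 x1 x2 y1 y2 : ℤ,
    u1.natAbs + u2.natAbs + v1.natAbs + v2.natAbs + x1.natAbs + x2.natAbs + y1.natAbs + y2.natAbs ≤ n →
    u1^2 - u2^2 - 5*(v1^2 - v2^2) = -(2*x1*x2 - 10*y1*y2) →
    2*u1*u2 - 10*v1*v2 = x1^2 - x2^2 - 5*(y1^2 - y2^2) →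
    u1 = 0 ∧ u2 = 0 ∧ v1 = 0 ∧ v2 = 0 ∧ x1 = 0 ∧ x2 = 0 ∧ y1 = 0 ∧ y2 = 0 := by
  intro n
  induction n using Nat.strong_induction_on with
  | _ n ih =>
    intro u1 u2 v1 v2 x1 x2 y1 y2 hn h1 h2
    have h50 : (5 : ZMod 5) = 0 := by decide
    have toZ : ∀ A B : ℤ, A = 5*B → (A : ZMod 5) = 0 := by
      intro A B hAB
      have := congrArg (fun z : ℤ => (z : ZMod 5)) hAB
      push_cast at this
      rw [h50, zero_mul] at this
      exact this
    by_cases hz : u1.natAbs + u2.natAbs + v1.natAbs + v2.natAbs + x1.natAbs + x2.natAbs +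
        y1.natAbs + y2.natAbs = 0
    · omega
    · have c1 : ((u1 : ZMod 5))^2 - (u2 : ZMod 5)^2 = -(2*((x1 : ZMod 5)*(x2 : ZMod 5))) := by
        have hc : ((u1^2 - u2^2 + 2*(x1*x2) : ℤ) : ZMod 5) = 0 :=
          toZ _ (v1^2 - v2^2 + 2*(y1*y2)) (by linear_combination h1)
        push_cast at hc
        linear_combination hc
      have c2 : 2*((u1 : ZMod 5)*(u2 : ZMod 5)) = (x1 : ZMod 5)^2 - (x2 : ZMod 5)^2 := by
        have hc : ((2*(u1*u2) - (x1^2 - x2^2) : ℤ) : ZMod 5) = 0 :=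
          toZ _ (2*(v1*v2) - (y1^2 - y2^2)) (by linear_combination h2)
        push_cast at hc
        linear_combination hc
      obtain ⟨e1, e2, e3, e4⟩ := d1 _ _ _ _ c1 c2
      obtain ⟨U1, rfl⟩ := (ZMod.intCast_zmod_eq_zero_iff_dvd u1 5).mp e1
      obtain ⟨U2, rfl⟩ := (ZMod.intCast_zmod_eq_zero_iff_dvd u2 5).mp e2
      obtain ⟨X1, rfl⟩ := (ZMod.intCast_zmod_eq_zero_iff_dvd x1 5).mp e3
      obtain ⟨X2, rfl⟩ := (ZMod.intCast_zmod_eq_zero_iff_dvd x2 5).mp e4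
      have h1b : 5*U1^2 - 5*U2^2 - (v1^2 - v2^2) = -(10*X1*X2 - 2*y1*y2) := by
        have h5 : (5:ℤ) * (5*U1^2 - 5*U2^2 - (v1^2 - v2^2)) = 5 * (-(10*X1*X2 - 2*y1*y2)) := by
          linear_combination h1
        exact mul_left_cancel₀ (by norm_num) h5
      have h2b : 10*U1*U2 - 2*v1*v2 = 5*(X1^2 - X2^2) - (y1^2 - y2^2) := by
        have h5 : (5:ℤ) * (10*U1*U2 - 2*v1*v2) = 5 * (5*(X1^2 - X2^2) - (y1^2 - y2^2)) := by
          linear_combination h2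
        exact mul_left_cancel₀ (by norm_num) h5
      have c1b : ((v1 : ZMod 5))^2 - (v2 : ZMod 5)^2 = -(2*((y1 : ZMod 5)*(y2 : ZMod 5))) := by
        have hc : ((v1^2 - v2^2 + 2*(y1*y2) : ℤ) : ZMod 5) = 0 :=
          toZ _ (U1^2 - U2^2 + 2*(X1*X2)) (by linear_combination (-1 : ℤ) * h1b)
        push_cast at hc
        linear_combination hc
      have c2b : 2*((v1 : ZMod 5)*(v2 : ZMod 5)) = (y1 : ZMod 5)^2 - (y2 : ZMod 5)^2 := by
        have hc : ((2*(v1*v2) - (y1^2 - y2^2) : ℤ) : ZMod 5) = 0 :=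
          toZ _ (2*(U1*U2) - (X1^2 - X2^2)) (by linear_combination (-1 : ℤ) * h2b)
        push_cast at hc
        linear_combination hc
      obtain ⟨f1, f2, f3, f4⟩ := d1 _ _ _ _ c1b c2b
      obtain ⟨V1, rfl⟩ := (ZMod.intCast_zmod_eq_zero_iff_dvd v1 5).mp f1
      obtain ⟨V2, rfl⟩ := (ZMod.intCast_zmod_eq_zero_iff_dvd v2 5).mp f2
      obtain ⟨Y1, rfl⟩ := (ZMod.intCast_zmod_eq_zero_iff_dvd y1 5).mp f3
      obtain ⟨Y2, rfl⟩ := (ZMod.intCast_zmod_eq_zero_iff_dvd y2 5).mp f4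
      have h1c : U1^2 - U2^2 - 5*(V1^2 - V2^2) = -(2*X1*X2 - 10*Y1*Y2) := by
        have h5 : (5:ℤ) * (U1^2 - U2^2 - 5*(V1^2 - V2^2)) = 5 * (-(2*X1*X2 - 10*Y1*Y2)) := by
          linear_combination h1b
        exact mul_left_cancel₀ (by norm_num) h5
      have h2c : 2*U1*U2 - 10*V1*V2 = X1^2 - X2^2 - 5*(Y1^2 - Y2^2) := by
        have h5 : (5:ℤ) * (2*U1*U2 - 10*V1*V2) = 5 * (X1^2 - X2^2 - 5*(Y1^2 - Y2^2)) := by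
          linear_combination h2b
        exact mul_left_cancel₀ (by norm_num) h5
      have hm : U1.natAbs + U2.natAbs + V1.natAbs + V2.natAbs + X1.natAbs + X2.natAbs +
          Y1.natAbs + Y2.natAbs < n := by
        simp only [Int.natAbs_mul, Int.natAbs_natCast] at hn hz
        omega
      obtain ⟨z1, z2, z3, z4, z5, z6, z7, z8⟩ :=
        ih _ hm U1 U2 V1 V2 X1 X2 Y1 Y2 (le_refl _) h1c h2c
      omega

lemma den_clear (q : ℚ) (k : ℤ) (hk : (q.den : ℤ) ∣ k) : ∃ m : ℤ, (m : ℚ) = q * k := by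
  obtain ⟨c, rfl⟩ := hk
  refine ⟨q.num * c, ?_⟩
  push_cast
  rw [← mul_assoc, Rat.mul_den_eq_num]

lemma normLemma (p1 q1 r1 s1 p2 q2 r2 s2 : ℚ)
    (h1 : p1^2 - q1^2 + p1*r1 - q1*s1 - r1^2 + s1^2 = -(2*p2*q2 + p2*s2 + q2*r2 - 2*r2*s2))
    (h2 : 2*p1*q1 + p1*s1 + q1*r1 - 2*r1*s1 = p2^2 - q2^2 + p2*r2 - q2*s2 - r2^2 + s2^2) :
    p1 = 0 ∧ q1 = 0 ∧ r1 = 0 ∧ s1 = 0 ∧ p2 = 0 ∧ q2 = 0 ∧ r2 = 0 ∧ s2 = 0 := by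
  set n : ℤ := (p1.den : ℤ) * q1.den * r1.den * s1.den * p2.den * q2.den * r2.den * s2.den with hn
  have hd : ∀ x : ℚ, ((x.den : ℤ)) ≠ 0 := fun x => Int.natCast_ne_zero.mpr x.den_nz
  have hn0 : n ≠ 0 := by
    rw [hn]
    exact mul_ne_zero (mul_ne_zero (mul_ne_zero (mul_ne_zero (mul_ne_zero (mul_ne_zero
      (mul_ne_zero (hd p1) (hd q1)) (hd r1)) (hd s1)) (hd p2)) (hd q2)) (hd r2)) (hd s2)
  have hnq : (n : ℚ) ≠ 0 := by exact_mod_cast hn0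
  obtain ⟨mp1, hmp1⟩ := den_clear p1 n ⟨(q1.den : ℤ) * r1.den * s1.den * p2.den * q2.den * r2.den * s2.den, by rw [hn]; ring⟩
  obtain ⟨mq1, hmq1⟩ := den_clear q1 n ⟨(p1.den : ℤ) * r1.den * s1.den * p2.den * q2.den * r2.den * s2.den, by rw [hn]; ring⟩
  obtain ⟨mr1, hmr1⟩ := den_clear r1 n ⟨(p1.den : ℤ) * q1.den * s1.den * p2.den * q2.den * r2.den * s2.den, by rw [hn]; ring⟩
  obtain ⟨ms1, hms1⟩ := den_clear s1 n ⟨(p1.den : ℤ) * q1.den * r1.den * p2.den * q2.den * r2.den * s2.den, by rw [hn]; ring⟩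
  obtain ⟨mp2, hmp2⟩ := den_clear p2 n ⟨(p1.den : ℤ) * q1.den * r1.den * s1.den * q2.den * r2.den * s2.den, by rw [hn]; ring⟩
  obtain ⟨mq2, hmq2⟩ := den_clear q2 n ⟨(p1.den : ℤ) * q1.den * r1.den * s1.den * p2.den * r2.den * s2.den, by rw [hn]; ring⟩
  obtain ⟨mr2, hmr2⟩ := den_clear r2 n ⟨(p1.den : ℤ) * q1.den * r1.den * s1.den * p2.den * q2.den * s2.den, by rw [hn]; ring⟩
  obtain ⟨ms2, hms2⟩ := den_clear s2 n ⟨(p1.den : ℤ) * q1.den * r1.den * s1.den * p2.den * q2.den * r2.den, by rw [hn]; ring⟩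
  have E1 : (2*mp1+mr1)^2 - (2*mq1+ms1)^2 - 5*(mr1^2 - ms1^2)
      = -(2*(2*mp2+mr2)*(2*mq2+ms2) - 10*mr2*ms2) := by
    have hq : ((2*mp1+mr1 : ℤ) : ℚ)^2 - ((2*mq1+ms1 : ℤ) : ℚ)^2
        - 5*(((mr1 : ℤ) : ℚ)^2 - ((ms1 : ℤ) : ℚ)^2)
        = -(2*((2*mp2+mr2 : ℤ) : ℚ)*((2*mq2+ms2 : ℤ) : ℚ) - 10*((mr2 : ℤ) : ℚ)*((ms2 : ℤ) : ℚ)) := by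
      push_cast
      rw [hmp1, hmq1, hmr1, hms1, hmp2, hmq2, hmr2, hms2]
      linear_combination (4*(n : ℚ)^2) * h1
    exact_mod_cast hq
  have E2 : 2*(2*mp1+mr1)*(2*mq1+ms1) - 10*mr1*ms1
      = (2*mp2+mr2)^2 - (2*mq2+ms2)^2 - 5*(mr2^2 - ms2^2) := by
    have hq : 2*((2*mp1+mr1 : ℤ) : ℚ)*((2*mq1+ms1 : ℤ) : ℚ) - 10*((mr1 : ℤ) : ℚ)*((ms1 : ℤ) : ℚ)
        = ((2*mp2+mr2 : ℤ) : ℚ)^2 - ((2*mq2+ms2 : ℤ) : ℚ)^2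
          - 5*(((mr2 : ℤ) : ℚ)^2 - ((ms2 : ℤ) : ℚ)^2) := by
      push_cast
      rw [hmp1, hmq1, hmr1, hms1, hmp2, hmq2, hmr2, hms2]
      linear_combination (4*(n : ℚ)^2) * h2
    exact_mod_cast hq
  obtain ⟨z1, z2, z3, z4, z5, z6, z7, z8⟩ := descent _ _ _ _ _ _ _ _ _ (le_refl _) E1 E2
  have key : ∀ (m : ℤ) (t : ℚ), (m : ℚ) = t * n → m = 0 → t = 0 := by
    intro m t hm hz
    rw [hz] at hm
    have ht : t * (n : ℚ) = 0 := by exact_mod_cast hm.symm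
    rcases mul_eq_zero.mp ht with h | h
    · exact h
    · exact absurd h hnq
  have hr1 : r1 = 0 := key mr1 r1 hmr1 (by omega)
  have hs1 : s1 = 0 := key ms1 s1 hms1 (by omega)
  have hr2 : r2 = 0 := key mr2 r2 hmr2 (by omega)
  have hs2 : s2 = 0 := key ms2 s2 hms2 (by omega)
  have hp1 : p1 = 0 := key mp1 p1 hmp1 (by omega)
  have hq1 : q1 = 0 := key mq1 q1 hmq1 (by omega)
  have hp2 : p2 = 0 := key mp2 p2 hmp2 (by omega)
  have hq2 : q2 = 0 := key mq2 q2 hmq2 (by omega)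
  exact ⟨hp1, hq1, hr1, hs1, hp2, hq2, hr2, hs2⟩

lemma goldsq : gold^2 = gold + 1 := by
  unfold gold
  have h5 : ((Real.sqrt 5 : ℝ) : ℂ)^2 = 5 := by
    have : (Real.sqrt 5)^2 = (5 : ℝ) := Real.sq_sqrt (by norm_num)
    exact_mod_cast congrArg (fun t : ℝ => (t : ℂ)) this
  linear_combination (1/4 : ℂ) * h5

lemma qelt_mul_qeltBar (a b c d : ℚ) :
    qelt a b c d * qeltBar a b c d
      = ((a^2 - c^2 + a*b - c*d - b^2 + d^2 : ℚ) : ℂ)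
        + ((2*a*c + a*d + b*c - 2*b*d : ℚ) : ℂ) * Complex.I := by
  have hg2 := goldsq
  have hI := Complex.I_sq
  simp only [qelt, qeltBar]
  push_cast
  linear_combination ((-2)*Complex.I*(b:ℂ)*(d:ℂ) + (-1)*Complex.I^2*(d:ℂ)^2 + (-1)*(b:ℂ)^2) * hg2 +
    ((c:ℂ)*(d:ℂ) + (c:ℂ)^2 + (-1)*(d:ℂ)^2) * hI

lemma mulT {x y Dc Tc : ℂ} (h : x * Dc = y) (hT : Dc * Tc = 1) : x = y * Tc := by
  calc x = x * (Dc * Tc) := by rw [hT, mul_one]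
  _ = (x * Dc) * Tc := by ring
  _ = y * Tc := by rw [h]

lemma qmat_mul (a b c d e f g h a' b' c' d' e' f' g' h' : ℚ)
    (h00 : qelt a b c d * qelt a' b' c' d' + qelt e f g h * (Complex.I * qeltBar e' f' g' h') = 1)
    (h01 : qelt a b c d * qelt e' f' g' h' + qelt e f g h * qeltBar a' b' c' d' = 0)
    (h10 : Complex.I * qeltBar e f g h * qelt a' b' c' d' + qeltBar a b c d * (Complex.I * qeltBar e' f' g' h') = 0)
    (h11 : Complex.I * qeltBar e f g h * qelt e' f' g' h' + qeltBar a b c d * qeltBar a' b' c' d' = 1) :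
    qmatA a b c d e f g h * qmatA a' b' c' d' e' f' g' h' = 1 := by
  ext i j
  fin_cases i <;> fin_cases j <;>
    simp [qmatA, Matrix.mul_apply, Fin.sum_univ_two, Matrix.one_apply] <;>
    [linear_combination h00; linear_combination h01; linear_combination h10; linear_combination h11]

/-- `γ = i` is not a relative norm of the extension `ℚ(i,θ)/ℚ(i)`; consequently
the cyclic algebra `𝒜 = (ℚ(i,θ)/ℚ(i), σ, i)` is a division algebra: every nonzero
element of `𝒜` has a two-sided inverse in `𝒜`. -/
theorem i_not_norm_and_division :
    (¬ ∃ p q r s : ℚ,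
        (((p : ℂ) + q * Complex.I) + ((r : ℂ) + s * Complex.I) * gold) *
          (((p : ℂ) + q * Complex.I) + ((r : ℂ) + s * Complex.I) * (1 - gold))
        = Complex.I) ∧
    (∀ a b c d e f g h : ℚ, qmatA a b c d e f g h ≠ 0 →
      ∃ a' b' c' d' e' f' g' h' : ℚ,
        qmatA a b c d e f g h * qmatA a' b' c' d' e' f' g' h' = 1 ∧
        qmatA a' b' c' d' e' f' g' h' * qmatA a b c d e f g h = 1) := by
  have hI := Complex.I_sq
  have hg2 := goldsq
  constructor
  · rintro ⟨p, q, r, s, hpq⟩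
    have key : (((p : ℂ) + q * Complex.I) + ((r : ℂ) + s * Complex.I) * gold) *
          (((p : ℂ) + q * Complex.I) + ((r : ℂ) + s * Complex.I) * (1 - gold))
        = ((p^2 - q^2 + p*r - q*s - r^2 + s^2 : ℚ) : ℂ)
          + ((2*p*q + p*s + q*r - 2*r*s : ℚ) : ℂ) * Complex.I := by
      push_cast
      linear_combination ((-2)*Complex.I*(r:ℂ)*(s:ℂ) + (-1)*Complex.I^2*(s:ℂ)^2 + (-1)*(r:ℂ)^2) * hg2 +
        ((q:ℂ)*(s:ℂ) + (q:ℂ)^2 + (-1)*(s:ℂ)^2) * hI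
    rw [key] at hpq
    have hre := congrArg Complex.re hpq
    have him := congrArg Complex.im hpq
    simp only [Complex.add_re, Complex.add_im, Complex.mul_re, Complex.mul_im,
      Complex.I_re, Complex.I_im, Complex.ratCast_re, Complex.ratCast_im,
      mul_zero, mul_one, zero_mul, sub_zero, zero_sub, add_zero, zero_add, neg_zero] at hre him
    have hP : (p^2 - q^2 + p*r - q*s - r^2 + s^2 : ℚ) = 0 := by exact_mod_cast hre
    have hQ : (2*p*q + p*s + q*r - 2*r*s : ℚ) = 1 := by exact_mod_cast him
    have hz := normLemma p q r s 1 0 0 0 (by linear_combination hP) (by linear_combination hQ)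
    exact absurd hz.2.2.2.2.1 (by norm_num)
  · intro a b c d e f g h hM
    set P1 : ℚ := a^2 - c^2 + a*b - c*d - b^2 + d^2 with hP1def
    set Q1 : ℚ := 2*a*c + a*d + b*c - 2*b*d with hQ1def
    set P2 : ℚ := e^2 - g^2 + e*f - g*h - f^2 + h^2 with hP2def
    set Q2 : ℚ := 2*e*g + e*h + f*g - 2*f*h with hQ2def
    set u : ℚ := P1 + Q2 with hudef
    set v : ℚ := Q1 - P2 with hvdef
    set D : ℚ := u^2 + v^2 with hDdef
    have hDne : D ≠ 0 := by
      intro hD0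
      rw [hDdef] at hD0
      have hu0 : u = 0 := by nlinarith [sq_nonneg u, sq_nonneg v]
      have hv0 : v = 0 := by nlinarith [sq_nonneg u, sq_nonneg v]
      rw [hudef, hP1def, hQ2def] at hu0
      rw [hvdef, hQ1def, hP2def] at hv0
      obtain ⟨ha0, hc0, hb0, hd0, he0, hg0, hf0, hh0⟩ :=
        normLemma a c b d e g f h (by linear_combination hu0) (by linear_combination hv0)
      apply hM
      subst ha0 hb0 hc0 hd0 he0 hf0 hg0 hh0
      ext i j
      fin_cases i <;> fin_cases j <;> simp [qmatA, qelt, qeltBar]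
    have hDC : ((D : ℚ) : ℂ) ≠ 0 := by exact_mod_cast hDne
    set T : ℂ := ((D : ℚ) : ℂ)⁻¹ with hTdef
    have hT : ((D : ℚ) : ℂ) * T = 1 := mul_inv_cancel₀ hDC
    have hucast : ((u : ℚ) : ℂ) = ((P1 : ℚ) : ℂ) + ((Q2 : ℚ) : ℂ) := by
      rw [hudef]; push_cast; ring
    have hvcast : ((v : ℚ) : ℂ) = ((Q1 : ℚ) : ℂ) - ((P2 : ℚ) : ℂ) := by
      rw [hvdef]; push_cast; ring
    have hDPQ : ((D : ℚ) : ℂ) = (((P1 : ℚ) : ℂ) + ((Q2 : ℚ) : ℂ))^2 + (((Q1 : ℚ) : ℂ) - ((P2 : ℚ) : ℂ))^2 := by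
      rw [hDdef, hudef, hvdef]; push_cast; ring
    have hN1 : qelt a b c d * qeltBar a b c d = ((P1 : ℚ) : ℂ) + ((Q1 : ℚ) : ℂ) * Complex.I := by
      rw [hP1def, hQ1def]; exact qelt_mul_qeltBar a b c d
    have hN2 : qelt e f g h * qeltBar e f g h = ((P2 : ℚ) : ℂ) + ((Q2 : ℚ) : ℂ) * Complex.I := by
      rw [hP2def, hQ2def]; exact qelt_mul_qeltBar e f g h
    set a' : ℚ := ((a+b)*u + (c+d)*v)/D with ha'def
    set b' : ℚ := (-(b*u + d*v))/D with hb'def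
    set c' : ℚ := ((c+d)*u - (a+b)*v)/D with hc'def
    set d' : ℚ := (-(d*u - b*v))/D with hd'def
    set e' : ℚ := (-(e*u + g*v))/D with he'def
    set f' : ℚ := (-(f*u + h*v))/D with hf'def
    set g' : ℚ := (-(g*u - e*v))/D with hg'def
    set h' : ℚ := (-(h*u - f*v))/D with hh'def
    have mk : ∀ num : ℚ, ((num/D : ℚ) : ℂ) = (num : ℂ) * T := by
      intro num
      rw [hTdef]
      push_cast
      rw [div_eq_mul_inv]
    have ha'c : ((a' : ℚ) : ℂ) = (((a:ℂ)+(b:ℂ))*(u:ℂ) + ((c:ℂ)+(d:ℂ))*(v:ℂ)) * T := by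
      rw [ha'def, mk]; push_cast; ring
    have hb'c : ((b' : ℚ) : ℂ) = (-((b:ℂ)*(u:ℂ) + (d:ℂ)*(v:ℂ))) * T := by
      rw [hb'def, mk]; push_cast; ring
    have hc'c : ((c' : ℚ) : ℂ) = (((c:ℂ)+(d:ℂ))*(u:ℂ) - ((a:ℂ)+(b:ℂ))*(v:ℂ)) * T := by
      rw [hc'def, mk]; push_cast; ring
    have hd'c : ((d' : ℚ) : ℂ) = (-((d:ℂ)*(u:ℂ) - (b:ℂ)*(v:ℂ))) * T := by
      rw [hd'def, mk]; push_cast; ring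
    have he'c : ((e' : ℚ) : ℂ) = (-((e:ℂ)*(u:ℂ) + (g:ℂ)*(v:ℂ))) * T := by
      rw [he'def, mk]; push_cast; ring
    have hf'c : ((f' : ℚ) : ℂ) = (-((f:ℂ)*(u:ℂ) + (h:ℂ)*(v:ℂ))) * T := by
      rw [hf'def, mk]; push_cast; ring
    have hg'c : ((g' : ℚ) : ℂ) = (-((g:ℂ)*(u:ℂ) - (e:ℂ)*(v:ℂ))) * T := by
      rw [hg'def, mk]; push_cast; ring
    have hh'c : ((h' : ℚ) : ℂ) = (-((h:ℂ)*(u:ℂ) - (f:ℂ)*(v:ℂ))) * T := by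
      rw [hh'def, mk]; push_cast; ring
    have hx1' : qelt a' b' c' d' = ((u:ℂ) - (v:ℂ)*Complex.I) * qeltBar a b c d * T := by
      simp only [qelt, qeltBar]
      linear_combination (1) * ha'c + (gold) * hb'c + (Complex.I) * hc'c + (gold*Complex.I) * hd'c +
        ((-1)*gold*T*(d:ℂ)*(v:ℂ) + T*(c:ℂ)*(v:ℂ) + T*(d:ℂ)*(v:ℂ)) * hI
    have hx2' : qelt e' f' g' h' = -(((u:ℂ) - (v:ℂ)*Complex.I) * qelt e f g h * T) := by
      simp only [qelt, qeltBar]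
      linear_combination (1) * he'c + (gold) * hf'c + (Complex.I) * hg'c + (gold*Complex.I) * hh'c +
        ((-1)*gold*T*(h:ℂ)*(v:ℂ) + (-1)*T*(g:ℂ)*(v:ℂ)) * hI
    have hy1' : qeltBar a' b' c' d' = ((u:ℂ) - (v:ℂ)*Complex.I) * qelt a b c d * T := by
      simp only [qelt, qeltBar]
      linear_combination (1) * ha'c + (1 + (-1)*gold) * hb'c + (Complex.I) * hc'c +
        ((-1)*gold*Complex.I + Complex.I) * hd'c + (gold*T*(d:ℂ)*(v:ℂ) + T*(c:ℂ)*(v:ℂ)) * hI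
    have hy2' : qeltBar e' f' g' h' = -(((u:ℂ) - (v:ℂ)*Complex.I) * qeltBar e f g h * T) := by
      simp only [qelt, qeltBar]
      linear_combination (1) * he'c + (1 + (-1)*gold) * hf'c + (Complex.I) * hg'c +
        ((-1)*gold*Complex.I + Complex.I) * hh'c +
        (gold*T*(h:ℂ)*(v:ℂ) + (-1)*T*(g:ℂ)*(v:ℂ) + (-1)*T*(h:ℂ)*(v:ℂ)) * hI
    refine ⟨a', b', c', d', e', f', g', h', ?_, ?_⟩
    · apply qmat_mul
      · rw [hx1', hy2']
        linear_combination ((-1)*Complex.I*T*(v:ℂ) + T*(u:ℂ)) * hN1 + ((-1)*Complex.I*T*(u:ℂ) + Complex.I^2*T*(v:ℂ)) * hN2 + ((-1)*Complex.I*T*(P2:ℂ) + Complex.I*T*(Q1:ℂ) + (-1)*Complex.I^2*T*(Q2:ℂ) + T*(P1:ℂ)) * hucast + ((-1)*Complex.I*T*(P1:ℂ) + Complex.I^2*T*(P2:ℂ) + (-1)*Complex.I^2*T*(Q1:ℂ) + Complex.I^3*T*(Q2:ℂ)) * hvcast + ((-1)*Complex.I*T*(P2:ℂ)*(Q2:ℂ)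 + Complex.I*T*(Q1:ℂ)*(Q2:ℂ) + (-1)*T*(P1:ℂ)*(Q2:ℂ) + 2*T*(P2:ℂ)*(Q1:ℂ) + (-1)*T*(P2:ℂ)^2 + (-1)*T*(Q1:ℂ)^2 + (-1)*T*(Q2:ℂ)^2) * hI + ((-1)*T) * hDPQ + (1) * hT
      · rw [hx2', hy1']; ring
      · rw [hx1', hy2']; ring
      · rw [hx2', hy1']
        linear_combination ((-1)*Complex.I*T*(v:ℂ) + T*(u:ℂ)) * hN1 + ((-1)*Complex.I*T*(u:ℂ) + Complex.I^2*T*(v:ℂ)) * hN2 + ((-1)*Complex.I*T*(P2:ℂ) + Complex.I*T*(Q1:ℂ) + (-1)*Complex.I^2*T*(Q2:ℂ) + T*(P1:ℂ)) * hucast + ((-1)*Complex.I*T*(P1:ℂ) + Complex.I^2*T*(P2:ℂ) + (-1)*Complex.I^2*T*(Q1:ℂ) + Complex.I^3*T*(Q2:ℂ)) * hvcast + ((-1)*Complex.I*T*(P2:ℂ)*(Q2:ℂ) + Complex.I*T*(Q1:ℂ)*(Q2:ℂ) + (-1)*T*(P1:ℂ)*(Q2:ℂ) + 2*T*(P2:ℂ)*(Q1:ℂ)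 + (-1)*T*(P2:ℂ)^2 + (-1)*T*(Q1:ℂ)^2 + (-1)*T*(Q2:ℂ)^2) * hI + ((-1)*T) * hDPQ + (1) * hT
    · apply qmat_mul
      · rw [hx1', hx2']
        linear_combination ((-1)*Complex.I*T*(v:ℂ) + T*(u:ℂ)) * hN1 + ((-1)*Complex.I*T*(u:ℂ) + Complex.I^2*T*(v:ℂ)) * hN2 + ((-1)*Complex.I*T*(P2:ℂ) + Complex.I*T*(Q1:ℂ) + (-1)*Complex.I^2*T*(Q2:ℂ) + T*(P1:ℂ)) * hucast + ((-1)*Complex.I*T*(P1:ℂ) + Complex.I^2*T*(P2:ℂ) + (-1)*Complex.I^2*T*(Q1:ℂ) + Complex.I^3*T*(Q2:ℂ)) * hvcast + ((-1)*Complex.I*T*(P2:ℂ)*(Q2:ℂ) + Complex.I*T*(Q1:ℂ)*(Q2:ℂ) + (-1)*T*(P1:ℂ)*(Q2:ℂ) + 2*T*(P2:ℂ)*(Q1:ℂ) + (-1)*T*(P2:ℂ)^2 + (-1)*T*(Q1:ℂ)^2 + (-1)*T*(Q2:ℂ)^2) * hI + ((-1)*T) * hDPQ + (1) * hT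
      · rw [hx1', hx2']; ring
      · rw [hy1', hy2']; ring
      · rw [hy1', hy2']
        linear_combination ((-1)*Complex.I*T*(v:ℂ) + T*(u:ℂ)) * hN1 + ((-1)*Complex.I*T*(u:ℂ) + Complex.I^2*T*(v:ℂ)) * hN2 + ((-1)*Complex.I*T*(P2:ℂ) + Complex.I*T*(Q1:ℂ) + (-1)*Complex.I^2*T*(Q2:ℂ) + T*(P1:ℂ)) * hucast + ((-1)*Complex.I*T*(P1:ℂ) + Complex.I^2*T*(P2:ℂ) + (-1)*Complex.I^2*T*(Q1:ℂ) + Complex.I^3*T*(Q2:ℂ)) * hvcast + ((-1)*Complex.I*T*(P2:ℂ)*(Q2:ℂ) + Complex.I*T*(Q1:ℂ)*(Q2:ℂ) + (-1)*T*(P1:ℂ)*(Q2:ℂ) + 2*T*(P2:ℂ)*(Q1:ℂ) + (-1)*T*(P2:ℂ)^2 + (-1)*T*(Q1:ℂ)^2 + (-1)*T*(Q2:ℂ)^2) * hI + ((-1)*T) * hDPQ + (1) * hT
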